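/- arXiv:1902.00850 — 2 statements merged into one kernel-verified Lean document; each statement's English description precedes it below -/
import Mathlib

section
/- Let 0 < α < 1. For a continuous function φ : [0,t] → ℝ, Q_1^α(φ,t) ≤ 2 t^α ∫_0^t φ(s)^2 ds, where Q_1^α(φ,t) = ∫_0^t φ(s)(I^α φ)(s) ds. -/
open MeasureTheory

noncomputable def omega (μ t : ℝ) : ℝ := t ^ (μ - 1) / Real.Gamma μ

noncomputable def RL (μ : ℝ) (φ : ℝ → ℝ) (t : ℝ) : ℝ :=
  ∫ s in (0:ℝ)..t, omega μ (t - s) * φ s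

noncomputable def Q1 (α : ℝ) (φ : ℝ → ℝ) (t : ℝ) : ℝ :=
  ∫ s in (0:ℝ)..t, φ s * RL α φ s

open Real Set
open scoped Convolution

lemma gamma_ge_half {x : ℝ} (h1 : 1 ≤ x) (h2 : x ≤ 2) : (1/2 : ℝ) ≤ Real.Gamma x := by
  have hsπ : (3/2 : ℝ) ≤ Real.sqrt π := by
    rw [show (3/2:ℝ) = Real.sqrt (9/4) by
      rw [show (9/4:ℝ) = (3/2)^2 by norm_num, Real.sqrt_sq (by norm_num)]]
    exact Real.sqrt_le_sqrt (by nlinarith [Real.pi_gt_three])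
  have hΓ32 : Real.Gamma (3/2) = Real.sqrt π / 2 := by
    have h : Real.Gamma (1/2 + 1) = (1/2) * Real.Gamma (1/2) :=
      Real.Gamma_add_one (by norm_num)
    rw [show (3/2:ℝ) = 1/2 + 1 by norm_num, h, Real.Gamma_one_half_eq]
    ring
  have hc := Real.convexOn_Gamma
  have hx0 : (0:ℝ) < x := by linarith
  rcases le_or_gt x (3/2) with hx | hx
  · have h2x : (0:ℝ) < 2 - x := by linarith
    set a : ℝ := 1 / (2 * (2 - x)) with ha
    have ha0 : 0 ≤ a := by positivity
    have haval : a * (2 - x) = 1/2 := by rw [ha]; field_simp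
    have ha1 : a ≤ 1 := by
      rw [ha, div_le_one (by linarith)]; nlinarith
    have key := hc.2 (Set.mem_Ioi.mpr hx0) (Set.mem_Ioi.mpr (by norm_num : (0:ℝ) < 2))
      ha0 (by linarith : (0:ℝ) ≤ 1 - a) (by ring)
    have hcomb : a • x + (1 - a) • (2:ℝ) = 3/2 := by
      simp only [smul_eq_mul]; linear_combination -haval
    rw [hcomb, hΓ32, Real.Gamma_two] at key
    simp only [smul_eq_mul, mul_one] at key
    nlinarith [key, hsπ, ha0, haval]
  · have hx1 : (0:ℝ) < x - 1 := by linarith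
    set b : ℝ := (1/2) / (x - 1) with hb
    have hb0 : 0 ≤ b := by positivity
    have hbval : b * (x - 1) = 1/2 := by rw [hb]; field_simp
    have hb1 : b ≤ 1 := by rw [hb, div_le_one hx1]; linarith
    have key := hc.2 (Set.mem_Ioi.mpr (by norm_num : (0:ℝ) < 1)) (Set.mem_Ioi.mpr hx0)
      (by linarith : (0:ℝ) ≤ 1 - b) hb0 (by ring)
    have hcomb : (1 - b) • (1:ℝ) + b • x = 3/2 := by
      simp only [smul_eq_mul]; linear_combination hbval
    rw [hcomb, hΓ32, Real.Gamma_one] at key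
    simp only [smul_eq_mul, mul_one] at key
    nlinarith [key, hsπ, hb0, hbval, hx1]

set_option maxHeartbeats 1000000 in
theorem stmt_4 (α t : ℝ) (hα0 : 0 < α) (hα1 : α < 1) (ht : 0 ≤ t)
    (φ : ℝ → ℝ) (hφ : ContinuousOn φ (Set.Icc 0 t)) :
    Q1 α φ t ≤ 2 * t ^ α * ∫ s in (0:ℝ)..t, (φ s) ^ 2 := by
  have hΓ : 0 < Real.Gamma α := Real.Gamma_pos_of_pos hα0
  have hI2 : 0 ≤ ∫ s in (0:ℝ)..t, (φ s) ^ 2 :=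
    intervalIntegral.integral_nonneg ht (fun u _ => sq_nonneg _)
  have htα : 0 ≤ t ^ α := Real.rpow_nonneg ht α
  set I : ℝ := ∫ s in (0:ℝ)..t, (φ s) ^ 2 with hIdef
  by_cases hQint : IntervalIntegrable (fun s => φ s * RL α φ s) volume 0 t
  swap
  · rw [Q1, intervalIntegral.integral_undef hQint]
    positivity
  -- main case
  set c : ℝ := t ^ α / (α * Real.Gamma α) with hcdef
  -- auxiliary functions
  set ψ : ℝ → ℝ := (Set.Icc (0:ℝ) t).indicator (fun u => (φ u) ^ 2) with hψdef
  set w : ℝ → ℝ := (Set.Ioc (0:ℝ) t).indicator (fun v => v ^ (α - 1) / Real.Gamma α) with hwdef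
  have hwnn : ∀ v, 0 ≤ w v := fun v =>
    Set.indicator_nonneg (fun v hv => div_nonneg (Real.rpow_nonneg hv.1.le _) hΓ.le) v
  have hψnn : ∀ u, 0 ≤ ψ u := fun u => Set.indicator_nonneg (fun u _ => sq_nonneg _) u
  have hwint : Integrable w volume := by
    have h1 : IntervalIntegrable (fun v => v ^ (α - 1) / Real.Gamma α) volume 0 t :=
      (intervalIntegral.intervalIntegrable_rpow' (by linarith)).div_const _
    exact ((intervalIntegrable_iff_integrableOn_Ioc_of_le ht).mp h1).integrable_indicator
      measurableSet_Ioc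
  have hψint : Integrable ψ volume :=
    ((hφ.pow 2).integrableOn_Icc).integrable_indicator measurableSet_Icc
  -- value of the interval integral of the kernel
  have hwval : ∀ s : ℝ, (∫ v in (0:ℝ)..s, v ^ (α - 1) / Real.Gamma α)
      = s ^ α / (α * Real.Gamma α) := by
    intro s
    rw [intervalIntegral.integral_div, integral_rpow (Or.inl (by linarith : (-1:ℝ) < α - 1)),
      show α - 1 + 1 = α by ring, Real.zero_rpow hα0.ne']
    ring
  have hIw : ∫ v, w v = c := by
    rw [hwdef, integral_indicator measurableSet_Ioc, ← intervalIntegral.integral_of_le ht,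
      hwval t]
  have hIpsi : ∫ u, ψ u = I := by
    rw [hψdef, integral_indicator measurableSet_Icc, integral_Icc_eq_integral_Ioc,
      ← intervalIntegral.integral_of_le ht]
  -- the convolution
  set L : ℝ →L[ℝ] ℝ →L[ℝ] ℝ := ContinuousLinearMap.mul ℝ ℝ with hL
  set cv : ℝ → ℝ := w ⋆[L] ψ with hcvdef
  have hcveq : ∀ x, cv x = ∫ v, w v * ψ (x - v) := by
    intro x
    rw [hcvdef, convolution_def]
    simp [hL]
  have hcvnn : ∀ x, 0 ≤ cv x := by
    intro x
    rw [hcveq]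
    exact integral_nonneg fun v => mul_nonneg (hwnn v) (hψnn _)
  have hcvint : Integrable cv volume := hwint.integrable_convolution L hψint
  have hIcv : ∫ x, cv x = c * I := by
    rw [hcvdef, integral_convolution L hwint hψint, hIw, hIpsi]
    simp [hL]
  -- kernel integrability on subintervals
  have hker : ∀ s : ℝ, 0 ≤ s → ∀ g : ℝ → ℝ, ContinuousOn g (Set.Icc 0 s) →
      IntervalIntegrable (fun u => (s - u) ^ (α - 1) / Real.Gamma α * g u) volume 0 s := by
    intro s hs g hg
    have h1 : IntervalIntegrable (fun u => (s - u) ^ (α - 1) / Real.Gamma α) volume 0 s := by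
      have h2 := ((intervalIntegral.intervalIntegrable_rpow'
        (a := 0) (b := s) (by linarith : (-1:ℝ) < α - 1)).div_const
        (Real.Gamma α)).comp_sub_left s
      simpa using h2.symm
    exact h1.mul_continuousOn (by rwa [Set.uIcc_of_le hs])
  clear_value c I ψ w cv L
  -- identification of cv on [0, t]
  have hcvId : ∀ s ∈ Set.Icc (0:ℝ) t,
      cv s = ∫ u in (0:ℝ)..s, (s - u) ^ (α - 1) / Real.Gamma α * (φ u) ^ 2 := by
    intro s hs
    have h2 : ∫ v in Set.Ioc (0:ℝ) s, w v * ψ (s - v) = ∫ v, w v * ψ (s - v) := by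
      apply setIntegral_eq_integral_of_forall_compl_eq_zero
      intro v hv
      rcases lt_or_ge 0 v with hv0 | hv0
      · have hvs : s < v := by
          by_contra h
          exact hv ⟨hv0, not_lt.mp h⟩
        have : ψ (s - v) = 0 := by
          rw [hψdef]
          apply Set.indicator_of_notMem
          intro hmem
          have := hmem.1
          linarith
        rw [this, mul_zero]
      · have : w v = 0 := by
          rw [hwdef]
          apply Set.indicator_of_notMem
          intro hmem
          exact absurd hmem.1 (not_lt.mpr hv0)
        rw [this, zero_mul]
    have h3 : ∫ v in Set.Ioc (0:ℝ) s, w v * ψ (s - v)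
        = ∫ v in Set.Ioc (0:ℝ) s, v ^ (α - 1) / Real.Gamma α * (φ (s - v)) ^ 2 := by
      apply setIntegral_congr_fun measurableSet_Ioc
      intro v hv
      have hv' := Set.mem_Ioc.mp hv
      simp only [hwdef, hψdef]
      rw [Set.indicator_of_mem (Set.mem_Ioc.mpr ⟨hv'.1, hv'.2.trans hs.2⟩),
        Set.indicator_of_mem (Set.mem_Icc.mpr
          ⟨by linarith [hv'.2], by linarith [hv'.1, hs.2]⟩)]
    have h4 : (∫ u in (0:ℝ)..s, (s - u) ^ (α - 1) / Real.Gamma α * (φ u) ^ 2)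
        = ∫ v in (0:ℝ)..s, v ^ (α - 1) / Real.Gamma α * (φ (s - v)) ^ 2 := by
      have h5 := intervalIntegral.integral_comp_sub_left (a := 0) (b := s)
        (fun v => v ^ (α - 1) / Real.Gamma α * (φ (s - v)) ^ 2) s
      simp only [sub_sub_cancel, sub_zero, sub_self] at h5
      rw [← h5]
    rw [hcveq, ← h2, h3, h4, intervalIntegral.integral_of_le hs.1]
  -- pointwise bound
  have hpt : ∀ s ∈ Set.Icc (0:ℝ) t,
      φ s * RL α φ s ≤ c * (φ s) ^ 2 / 2 + cv s / 2 := by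
    intro s hs
    have hφs : ContinuousOn φ (Set.Icc 0 s) := hφ.mono (Set.Icc_subset_Icc_right hs.2)
    have hstep1 : φ s * RL α φ s
        = ∫ u in (0:ℝ)..s, (s - u) ^ (α - 1) / Real.Gamma α * (φ s * φ u) := by
      rw [RL, ← intervalIntegral.integral_const_mul]
      apply intervalIntegral.integral_congr
      intro u _
      simp only [omega]
      ring
    have hmono : (∫ u in (0:ℝ)..s, (s - u) ^ (α - 1) / Real.Gamma α * (φ s * φ u))
        ≤ ∫ u in (0:ℝ)..s, (s - u) ^ (α - 1) / Real.Gamma α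
            * (φ s ^ 2 / 2 + φ u ^ 2 / 2) := by
      apply intervalIntegral.integral_mono_on hs.1
        (hker s hs.1 _ (continuousOn_const.mul hφs))
        (hker s hs.1 _ (((continuousOn_const.div_const 2).add
          ((hφs.pow 2).div_const 2))))
      intro u hu
      have hk : 0 ≤ (s - u) ^ (α - 1) / Real.Gamma α :=
        div_nonneg (Real.rpow_nonneg (by linarith [hu.2]) _) hΓ.le
      apply mul_le_mul_of_nonneg_left _ hk
      show φ s * φ u ≤ φ s ^ 2 / 2 + φ u ^ 2 / 2
      nlinarith [sq_nonneg (φ s - φ u)]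
    have hsplit : (∫ u in (0:ℝ)..s, (s - u) ^ (α - 1) / Real.Gamma α
            * (φ s ^ 2 / 2 + φ u ^ 2 / 2))
        = (∫ u in (0:ℝ)..s, (s - u) ^ (α - 1) / Real.Gamma α * (φ s ^ 2 / 2))
          + ∫ u in (0:ℝ)..s, (s - u) ^ (α - 1) / Real.Gamma α * (φ u ^ 2 / 2) := by
      rw [← intervalIntegral.integral_add
        (hker s hs.1 _ continuousOn_const)
        (hker s hs.1 (fun u => φ u ^ 2 / 2) ((hφs.pow 2).div_const 2))]
      apply intervalIntegral.integral_congr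
      intro u _
      ring
    have hterm1 : (∫ u in (0:ℝ)..s, (s - u) ^ (α - 1) / Real.Gamma α * (φ s ^ 2 / 2))
        ≤ c * (φ s) ^ 2 / 2 := by
      have hkint : (∫ u in (0:ℝ)..s, (s - u) ^ (α - 1) / Real.Gamma α)
          = s ^ α / (α * Real.Gamma α) := by
        have h5 := intervalIntegral.integral_comp_sub_left (a := 0) (b := s)
          (fun v => v ^ (α - 1) / Real.Gamma α) s
        simp only [sub_zero, sub_self] at h5
        rw [h5, hwval s]
      rw [intervalIntegral.integral_mul_const, hkint]
      have hd : s ^ α / (α * Real.Gamma α) ≤ c := by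
        rw [hcdef, div_le_div_iff_of_pos_right (mul_pos hα0 hΓ)]
        exact Real.rpow_le_rpow hs.1 hs.2 hα0.le
      calc s ^ α / (α * Real.Gamma α) * (φ s ^ 2 / 2) ≤ c * (φ s ^ 2 / 2) :=
            mul_le_mul_of_nonneg_right hd (by positivity)
        _ = c * (φ s) ^ 2 / 2 := by ring
    have hterm2 : (∫ u in (0:ℝ)..s, (s - u) ^ (α - 1) / Real.Gamma α * (φ u ^ 2 / 2))
        = cv s / 2 := by
      rw [hcvId s hs, ← intervalIntegral.integral_div]
      apply intervalIntegral.integral_congr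
      intro u _
      ring
    calc φ s * RL α φ s
        = _ := hstep1
      _ ≤ _ := hmono
      _ = _ := hsplit
      _ ≤ c * (φ s) ^ 2 / 2 + cv s / 2 := by rw [hterm2]; linarith [hterm1]
  -- integrate the bound
  have hUint : IntervalIntegrable (fun s => c * (φ s) ^ 2 / 2 + cv s / 2) volume 0 t := by
    apply IntervalIntegrable.add
    · apply ContinuousOn.intervalIntegrable
      rw [Set.uIcc_of_le ht]
      exact (continuousOn_const.mul (hφ.pow 2)).div_const 2
    · exact hcvint.intervalIntegrable.div_const 2
  have hQle : Q1 α φ t ≤ ∫ s in (0:ℝ)..t, (c * (φ s) ^ 2 / 2 + cv s / 2) := by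
    rw [Q1]
    exact intervalIntegral.integral_mono_on ht hQint hUint hpt
  have hsplit2 : (∫ s in (0:ℝ)..t, (c * (φ s) ^ 2 / 2 + cv s / 2))
      = c * I / 2 + (∫ s in (0:ℝ)..t, cv s) / 2 := by
    rw [intervalIntegral.integral_add
      (by apply ContinuousOn.intervalIntegrable; rw [Set.uIcc_of_le ht];
          exact (continuousOn_const.mul (hφ.pow 2)).div_const 2)
      (hcvint.intervalIntegrable.div_const 2),
      intervalIntegral.integral_div, intervalIntegral.integral_div]
    congr 1
    rw [intervalIntegral.integral_const_mul, ← hIdef]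
  have hcvle : (∫ s in (0:ℝ)..t, cv s) ≤ c * I := by
    rw [intervalIntegral.integral_of_le ht, ← hIcv]
    exact setIntegral_le_integral hcvint (Filter.Eventually.of_forall hcvnn)
  have hcle : c ≤ 2 * t ^ α := by
    have hαΓ : (1/2 : ℝ) ≤ α * Real.Gamma α := by
      rw [← Real.Gamma_add_one hα0.ne']
      exact gamma_ge_half (by linarith) (by linarith)
    rw [hcdef, div_le_iff₀ (by linarith)]
    nlinarith [htα]
  calc Q1 α φ t ≤ c * I / 2 + (∫ s in (0:ℝ)..t, cv s) / 2 := by rw [← hsplit2]; exact hQle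
    _ ≤ c * I / 2 + c * I / 2 := by linarith [hcvle]
    _ = c * I := by ring
    _ ≤ 2 * t ^ α * I := mul_le_mul_of_nonneg_right hcle hI2
end

section
/- Let 0 < α < 1 and let u : [0,T] → ℝ be continuously differentiable. Then t ∂_t^{1-α} u(t) = I^α(M u' + α u)(t), i.e., t · d/dt (I^α u)(t) = ∫_0^t ω_α(t-s)(s u'(s) + α u(s)) ds, for all t ∈ (0,T]. -/
open MeasureTheory

section Aux

open Set Topology Filter

lemma measurable_rpow_const (c : ℝ) : Measurable fun x : ℝ => x ^ c := by
  have h : ∀ x : ℝ, x ^ c =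
      if x = 0 then (if c = 0 then 1 else 0)
      else Real.exp (Real.log x * c) * (if x < 0 then Real.cos (c * Real.pi) else 1) := by
    intro x
    rcases lt_trichotomy x 0 with hx | hx | hx
    · rw [Real.rpow_def_of_neg hx]
      simp [hx.ne, hx, mul_comm c Real.pi]
    · subst hx
      rcases eq_or_ne c 0 with hc | hc <;> simp [hc, Real.zero_rpow]
    · rw [Real.rpow_def_of_pos hx]
      simp [hx.ne', not_lt.mpr hx.le]
  simp_rw [h]
  exact Measurable.ite (measurableSet_eq) measurable_const
    (((Real.measurable_log.mul measurable_const).exp).mul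
      (Measurable.ite (measurableSet_lt measurable_id measurable_const)
        measurable_const measurable_const))

lemma measurable_omega (μ : ℝ) : Measurable (omega μ) :=
  (measurable_rpow_const (μ - 1)).div_const _

lemma omega_nonneg {μ t : ℝ} (hμ : 0 < μ) (ht : 0 ≤ t) : 0 ≤ omega μ t :=
  div_nonneg (Real.rpow_nonneg ht _) (Real.Gamma_pos_of_pos hμ).le

lemma omega_zero {μ : ℝ} (hμ : 1 < μ) : omega μ 0 = 0 := by
  unfold omega
  rw [Real.zero_rpow (by linarith), zero_div]

lemma continuous_omega {μ : ℝ} (hμ : 1 ≤ μ) : Continuous (omega μ) :=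
  (Real.continuous_rpow_const (by linarith)).div_const _

lemma intervalIntegrable_omega {μ : ℝ} (hμ : 0 < μ) (a b : ℝ) :
    IntervalIntegrable (fun s => omega μ (b - s)) volume a b := by
  have h1 : IntervalIntegrable (fun x : ℝ => x ^ (μ - 1)) volume (b - a) 0 :=
    intervalIntegral.intervalIntegrable_rpow' (by linarith)
  have h2 := h1.comp_sub_left b
  simp only [sub_sub_cancel, sub_zero] at h2
  exact h2.div_const _

lemma intervalIntegrable_omega' {μ : ℝ} (hμ : 0 < μ) (a b : ℝ) :
    IntervalIntegrable (omega μ) volume a b :=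
  (intervalIntegral.intervalIntegrable_rpow' (by linarith)).div_const _

lemma intervalIntegrable_omega_mul {μ : ℝ} (hμ : 0 < μ) {φ : ℝ → ℝ} (hφ : Continuous φ)
    (a b : ℝ) : IntervalIntegrable (fun s => omega μ (b - s) * φ s) volume a b :=
  (intervalIntegrable_omega hμ a b).mul_continuousOn hφ.continuousOn

lemma integral_omega {μ : ℝ} (hμ : 0 < μ) {a b : ℝ} :
    ∫ s in a..b, omega μ (b - s) = omega (μ + 1) (b - a) := by
  unfold omega
  rw [intervalIntegral.integral_div,
    intervalIntegral.integral_comp_sub_left (fun x : ℝ => x ^ (μ - 1)) b, sub_self,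
    integral_rpow (Or.inl (by linarith)), sub_add_cancel,
    Real.zero_rpow hμ.ne', Real.Gamma_add_one hμ.ne', add_sub_cancel_right]
  rw [sub_zero, div_div]

lemma integral_omega_base {μ : ℝ} (hμ : 0 < μ) (c : ℝ) :
    ∫ x in (0:ℝ)..c, omega μ x = omega (μ + 1) c := by
  unfold omega
  rw [intervalIntegral.integral_div, integral_rpow (Or.inl (by linarith)), sub_add_cancel,
    Real.zero_rpow hμ.ne', Real.Gamma_add_one hμ.ne', add_sub_cancel_right, sub_zero, div_div]

lemma integral_omega_right {μ : ℝ} (hμ : 0 < μ) (s t : ℝ) :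
    ∫ r in s..t, omega μ (r - s) = omega (μ + 1) (t - s) := by
  rw [intervalIntegral.integral_comp_sub_right (omega μ) s, sub_self, integral_omega_base hμ]

lemma omega_mono {μ : ℝ} (hμ : 0 < μ) {x y : ℝ} (hx : 0 ≤ x) (hxy : x ≤ y) :
    omega (μ + 1) x ≤ omega (μ + 1) y := by
  unfold omega
  exact (div_le_div_iff_of_pos_right (Real.Gamma_pos_of_pos (by linarith))).2
    (Real.rpow_le_rpow hx hxy (by linarith))

lemma mul_omega_self {μ : ℝ} (hμ : 0 < μ) {x : ℝ} (hx : 0 ≤ x) :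
    x * omega μ x = μ * omega (μ + 1) x := by
  unfold omega
  rw [Real.Gamma_add_one hμ.ne', add_sub_cancel_right]
  rcases eq_or_lt_of_le hx with h | h
  · rw [← h]
    simp [Real.zero_rpow hμ.ne']
  · have hxe : x ^ (μ - 1) * x = x ^ μ := by
      rw [← Real.rpow_add_one h.ne' (μ - 1), sub_add_cancel]
    field_simp [(Real.Gamma_pos_of_pos hμ).ne']
    calc x * x ^ (μ - 1) = x ^ (μ - 1) * x := by ring
      _ = x ^ μ := by rw [hxe]

lemma RL_abs_integral_le {μ : ℝ} (hμ : 0 < μ) {φ : ℝ → ℝ} (hφ : Continuous φ) {r C : ℝ}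
    (hr : 0 ≤ r) (hC : ∀ s ∈ Icc 0 r, |φ s| ≤ C) :
    ∫ s in (0:ℝ)..r, |omega μ (r - s) * φ s| ≤ C * omega (μ + 1) r := by
  have h2 : ∫ s in (0:ℝ)..r, |omega μ (r - s) * φ s| ≤ ∫ s in (0:ℝ)..r, omega μ (r - s) * C := by
    apply intervalIntegral.integral_mono_on hr (intervalIntegrable_omega_mul hμ hφ 0 r).abs
      ((intervalIntegrable_omega hμ 0 r).mul_const C)
    intro s hs
    rw [abs_mul]
    have h0 : 0 ≤ omega μ (r - s) := omega_nonneg hμ (by linarith [hs.2])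
    rw [abs_of_nonneg h0]
    exact mul_le_mul_of_nonneg_left (hC s hs) h0
  calc ∫ s in (0:ℝ)..r, |omega μ (r - s) * φ s| ≤ _ := h2
    _ = C * omega (μ + 1) r := by
        rw [intervalIntegral.integral_mul_const, integral_omega hμ, sub_zero, mul_comm]

lemma RL_abs_le {μ : ℝ} (hμ : 0 < μ) {φ : ℝ → ℝ} (hφ : Continuous φ) {r C : ℝ}
    (hr : 0 ≤ r) (hC : ∀ s ∈ Icc 0 r, |φ s| ≤ C) : |RL μ φ r| ≤ C * omega (μ + 1) r :=
  le_trans (intervalIntegral.abs_integral_le_integral_abs hr) (RL_abs_integral_le hμ hφ hr hC)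

lemma RL_parts {μ : ℝ} (hμ : 0 < μ) {u : ℝ → ℝ} (hu : ContDiff ℝ 1 u) {t : ℝ} (ht : 0 < t) :
    RL μ u t = u 0 * omega (μ + 1) t + RL (μ + 1) (deriv u) t := by
  have hv : Continuous (deriv u) := hu.continuous_deriv le_rfl
  set P : ℝ → ℝ := fun s => omega (μ + 1) (t - s) * u s with hPdef
  have hP : ContinuousOn P (Icc 0 t) :=
    (((continuous_omega (by linarith)).comp (continuous_const.sub continuous_id)).mul
      hu.continuous).continuousOn
  have hderiv : ∀ s ∈ Ioo 0 t,
      HasDerivAt P (-(omega μ (t - s) * u s) + omega (μ + 1) (t - s) * deriv u s) s := by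
    intro s hs
    have hts : (0:ℝ) < t - s := by linarith [hs.2]
    have h1 : HasDerivAt (fun s : ℝ => omega (μ + 1) (t - s)) (-omega μ (t - s)) s := by
      have hr : HasDerivAt (fun x : ℝ => x ^ μ) (μ * (t - s) ^ (μ - 1)) (t - s) :=
        Real.hasDerivAt_rpow_const (Or.inl hts.ne')
      have hsub : HasDerivAt (fun s : ℝ => t - s) (-1) s := by
        simpa using (hasDerivAt_id s).const_sub t
      have := (hr.comp s hsub).div_const (Real.Gamma (μ + 1))
      have e1 : (fun s : ℝ => omega (μ + 1) (t - s))
          = fun x => ((fun x : ℝ => x ^ μ) ∘ HSub.hSub t) x / Real.Gamma (μ + 1) := by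
        funext x
        simp [omega, add_sub_cancel_right]
      have e2 : -omega μ (t - s) = μ * (t - s) ^ (μ - 1) * -1 / Real.Gamma (μ + 1) := by
        rw [Real.Gamma_add_one hμ.ne', omega, mul_assoc, mul_div_mul_left _ _ hμ.ne']
        ring
      rw [e1, e2]
      exact this
    have h2 : HasDerivAt u (deriv u s) s :=
      ((hu.differentiable one_ne_zero) s).hasDerivAt
    have := h1.mul h2
    exact this.congr_deriv (by ring)
  have hint : IntervalIntegrable
      (fun s => -(omega μ (t - s) * u s) + omega (μ + 1) (t - s) * deriv u s) volume 0 t :=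
    (intervalIntegrable_omega_mul hμ hu.continuous 0 t).neg.add
      (intervalIntegrable_omega_mul (by linarith) hv 0 t)
  have hA := (intervalIntegrable_omega_mul hμ hu.continuous 0 t)
  have hB := (intervalIntegrable_omega_mul (show (0:ℝ) < μ + 1 by linarith) hv 0 t)
  have key := intervalIntegral.integral_eq_sub_of_hasDerivAt_of_le ht.le hP hderiv hint
  have key2 : (∫ s in (0:ℝ)..t, -(omega μ (t - s) * u s))
      + ∫ s in (0:ℝ)..t, omega (μ + 1) (t - s) * deriv u s = P t - P 0 := by
    have hA' : IntervalIntegrable (fun s => -(omega μ (t - s) * u s)) volume 0 t := by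
      exact hA.neg
    rw [← intervalIntegral.integral_add hA' hB]
    exact key
  rw [intervalIntegral.integral_neg] at key2
  have hPt : P t = 0 := by simp [hPdef, omega_zero (by linarith : (1:ℝ) < μ + 1)]
  have hP0 : P 0 = omega (μ + 1) t * u 0 := by simp [hPdef]
  rw [hPt, hP0] at key2
  simp only [RL]
  linarith [key2]

lemma RL_eq_sub (μ : ℝ) (φ : ℝ → ℝ) (r : ℝ) :
    RL μ φ r = ∫ τ in (0:ℝ)..r, omega μ τ * φ (r - τ) := by
  have h := intervalIntegral.integral_comp_sub_left (a := 0) (b := r)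
    (fun τ => omega μ τ * φ (r - τ)) r
  simp only [sub_sub_cancel, sub_zero, sub_self] at h
  rw [RL, ← h]

lemma continuousAt_RL {μ : ℝ} (hμ : 0 < μ) {φ : ℝ → ℝ} (hφ : Continuous φ) {t₀ : ℝ}
    (ht₀ : 0 < t₀) : ContinuousAt (RL μ φ) t₀ := by
  set b : ℝ := t₀ + 1 with hb
  have hb0 : (0:ℝ) < b := by linarith
  obtain ⟨C, hC⟩ : ∃ C, ∀ x ∈ Icc (0:ℝ) b, ‖φ x‖ ≤ C :=
    isCompact_Icc.exists_bound_of_continuousOn hφ.continuousOn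
  have hC0 : 0 ≤ C := le_trans (norm_nonneg _) (hC 0 ⟨le_rfl, hb0.le⟩)
  set F : ℝ → ℝ → ℝ := fun r τ => indicator (Ioo 0 r) (fun τ => omega μ τ * φ (r - τ)) τ
    with hF
  have key : ContinuousAt (fun r => ∫ τ in (0:ℝ)..b, F r τ) t₀ := by
    apply intervalIntegral.continuousAt_of_dominated_interval
      (bound := fun τ => omega μ τ * C)
    · filter_upwards with r
      exact (((measurable_omega μ).mul
        (hφ.measurable.comp (measurable_const.sub measurable_id))).aestronglyMeasurable).indicator
        measurableSet_Ioo
    · filter_upwards [eventually_lt_nhds (show t₀ < b by linarith),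
        eventually_gt_nhds ht₀] with r hrb hr0
      refine ae_of_all _ fun τ hτ => ?_
      rw [uIoc_of_le hb0.le] at hτ
      by_cases h : τ ∈ Ioo (0:ℝ) r
      · rw [hF]
        simp only [indicator_of_mem h]
        rw [Real.norm_eq_abs, abs_mul, abs_of_nonneg (omega_nonneg hμ h.1.le)]
        refine mul_le_mul_of_nonneg_left ?_ (omega_nonneg hμ h.1.le)
        exact hC _ ⟨by linarith [h.2], by linarith [h.1]⟩
      · rw [hF]
        simp only [indicator_of_notMem h, norm_zero]
        exact mul_nonneg (omega_nonneg hμ hτ.1.le) hC0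
    · exact (intervalIntegrable_omega' hμ 0 b).mul_const C
    · have hne : ∀ᵐ τ : ℝ, τ ≠ t₀ := by
        rw [ae_iff]
        simp only [not_not, setOf_eq_eq_singleton, Real.volume_singleton]
      filter_upwards [hne] with τ hτ hτI
      rw [uIoc_of_le hb0.le] at hτI
      rcases lt_or_gt_of_ne hτ with hlt | hgt
      · have hev : ∀ᶠ r in 𝓝 t₀, F r τ = omega μ τ * φ (r - τ) := by
          filter_upwards [eventually_gt_nhds hlt] with r hr
          rw [hF]
          simp only [indicator_of_mem (mem_Ioo.mpr ⟨hτI.1, hr⟩)]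
        have hc : ContinuousAt (fun r => omega μ τ * φ (r - τ)) t₀ :=
          (continuous_const.mul (hφ.comp (continuous_id.sub continuous_const))).continuousAt
        exact hc.congr (Filter.EventuallyEq.symm hev)
      · have hev : ∀ᶠ r in 𝓝 t₀, F r τ = 0 := by
          filter_upwards [eventually_lt_nhds hgt] with r hr
          rw [hF]
          have hnm : τ ∉ Ioo 0 r := by
            simp only [mem_Ioo, not_and, not_lt]
            intro h; linarith
          simp only [indicator_of_notMem hnm]
        exact continuousAt_const.congr (Filter.EventuallyEq.symm hev)
  apply key.congr
  filter_upwards [eventually_gt_nhds ht₀, eventually_lt_nhds (show t₀ < b by linarith)]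
    with r hr0 hrb
  show (∫ τ in (0:ℝ)..b, F r τ) = RL μ φ r
  rw [RL_eq_sub, intervalIntegral.integral_of_le hb0.le,
    intervalIntegral.integral_of_le (le_of_lt hr0), hF]
  rw [setIntegral_indicator measurableSet_Ioo,
    inter_eq_self_of_subset_right (Ioo_subset_Ioc_self.trans (Ioc_subset_Ioc_right hrb.le)),
    integral_Ioc_eq_integral_Ioo]

lemma intervalIntegrable_RL {μ : ℝ} (hμ : 0 < μ) {φ : ℝ → ℝ} (hφ : Continuous φ) {t : ℝ}
    (ht : 0 < t) : IntervalIntegrable (RL μ φ) volume 0 t := by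
  obtain ⟨C, hC⟩ : ∃ C, ∀ x ∈ Icc (0:ℝ) t, ‖φ x‖ ≤ C :=
    isCompact_Icc.exists_bound_of_continuousOn hφ.continuousOn
  rw [intervalIntegrable_iff_integrableOn_Ioc_of_le ht.le]
  have hcont : ContinuousOn (RL μ φ) (Ioc 0 t) := fun x hx =>
    (continuousAt_RL hμ hφ hx.1).continuousWithinAt
  refine Integrable.mono' (integrable_const (C * omega (μ + 1) t))
    (hcont.aestronglyMeasurable measurableSet_Ioc) ?_
  refine (ae_restrict_iff' measurableSet_Ioc).2 (ae_of_all _ fun r hr => ?_)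
  rw [Real.norm_eq_abs]
  calc |RL μ φ r| ≤ C * omega (μ + 1) r := by
        refine RL_abs_le hμ hφ hr.1.le fun s hs => ?_
        exact hC s ⟨hs.1, le_trans hs.2 hr.2⟩
    _ ≤ C * omega (μ + 1) t := by
        have hC0 : 0 ≤ C := le_trans (norm_nonneg _) (hC 0 ⟨le_rfl, ht.le⟩)
        exact mul_le_mul_of_nonneg_left (omega_mono hμ hr.1.le hr.2) hC0

lemma RL_semigroup {μ : ℝ} (hμ : 0 < μ) {φ : ℝ → ℝ} (hφ : Continuous φ) {t : ℝ} (ht : 0 < t) :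
    ∫ r in (0:ℝ)..t, RL μ φ r = RL (μ + 1) φ t := by
  obtain ⟨C, hC⟩ : ∃ C, ∀ x ∈ Icc (0:ℝ) t, ‖φ x‖ ≤ C :=
    isCompact_Icc.exists_bound_of_continuousOn hφ.continuousOn
  have hC0 : 0 ≤ C := le_trans (norm_nonneg _) (hC 0 ⟨le_rfl, ht.le⟩)
  set ν : Measure ℝ := volume.restrict (Ioc 0 t) with hν
  set W : ℝ × ℝ → ℝ :=
    indicator {q : ℝ × ℝ | q.2 < q.1} (fun q => omega μ (q.1 - q.2) * φ q.2) with hW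
  have hWmeas : AEStronglyMeasurable W (ν.prod ν) := by
    apply Measurable.aestronglyMeasurable
    exact Measurable.indicator
      (((measurable_omega μ).comp (measurable_fst.sub measurable_snd)).mul
        (hφ.measurable.comp measurable_snd))
      (measurableSet_lt measurable_snd measurable_fst)
  have hres : ∀ r ∈ Ioc (0:ℝ) t,
      ν.restrict (Iio r) = volume.restrict (Ioo (0:ℝ) r) := by
    intro r hr
    rw [hν, Measure.restrict_restrict measurableSet_Iio]
    congr 1
    ext x
    simp only [mem_inter_iff, mem_Iio, mem_Ioc, mem_Ioo]
    constructor
    · rintro ⟨h1, h2, h3⟩; exact ⟨h2, h1⟩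
    · rintro ⟨h1, h2⟩; exact ⟨h2, h1, le_trans h2.le hr.2⟩
  have hWs : ∀ r : ℝ, (fun s => W (r, s)) = indicator (Iio r) (fun s => omega μ (r - s) * φ s) := by
    intro r; funext s
    by_cases h : s < r <;> simp [hW, indicator, h]
  have hIntW : ∀ r ∈ Ioc (0:ℝ) t, Integrable (fun s => W (r, s)) ν := by
    intro r hr
    rw [hWs r, integrable_indicator_iff measurableSet_Iio, IntegrableOn, hres r hr]
    have h := intervalIntegrable_omega_mul hμ hφ 0 r
    rw [intervalIntegrable_iff_integrableOn_Ioc_of_le hr.1.le] at h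
    exact h.mono_set Ioo_subset_Ioc_self
  have hVal : ∀ r ∈ Ioc (0:ℝ) t, ∫ s, W (r, s) ∂ν = RL μ φ r := by
    intro r hr
    rw [hWs r, integral_indicator measurableSet_Iio, hres r hr, ← integral_Ioc_eq_integral_Ioo,
      RL, intervalIntegral.integral_of_le hr.1.le]
  have hNorm : ∀ r ∈ Ioc (0:ℝ) t, ∫ s, ‖W (r, s)‖ ∂ν ≤ C * omega (μ + 1) t := by
    intro r hr
    have heq : (fun s => ‖W (r, s)‖) = indicator (Iio r) fun s => ‖omega μ (r - s) * φ s‖ := by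
      funext s
      by_cases h : s < r <;> simp [hW, indicator, h]
    rw [heq, integral_indicator measurableSet_Iio, hres r hr, ← integral_Ioc_eq_integral_Ioo,
      ← intervalIntegral.integral_of_le hr.1.le]
    calc (∫ s in (0:ℝ)..r, ‖omega μ (r - s) * φ s‖)
        = ∫ s in (0:ℝ)..r, |omega μ (r - s) * φ s| := by simp only [Real.norm_eq_abs]
      _ ≤ C * omega (μ + 1) r := RL_abs_integral_le hμ hφ hr.1.le
          (fun s hs => hC s ⟨hs.1, le_trans hs.2 hr.2⟩)
      _ ≤ C * omega (μ + 1) t := mul_le_mul_of_nonneg_left (omega_mono hμ hr.1.le hr.2) hC0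
  have hIntProd : Integrable W (ν.prod ν) := by
    rw [integrable_prod_iff hWmeas]
    constructor
    · exact (ae_restrict_iff' measurableSet_Ioc).2 (ae_of_all _ hIntW)
    · refine Integrable.mono' (integrable_const (C * omega (μ + 1) t))
        hWmeas.norm.integral_prod_right' ?_
      refine (ae_restrict_iff' measurableSet_Ioc).2 (ae_of_all _ fun r hr => ?_)
      rw [Real.norm_eq_abs, abs_of_nonneg (integral_nonneg fun s => norm_nonneg _)]
      exact hNorm r hr
  have hswap : ∫ r, (∫ s, W (r, s) ∂ν) ∂ν = ∫ s, (∫ r, W (r, s) ∂ν) ∂ν :=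
    integral_integral_swap hIntProd
  have hVal2 : ∀ s ∈ Ioc (0:ℝ) t, ∫ r, W (r, s) ∂ν = omega (μ + 1) (t - s) * φ s := by
    intro s hs
    have hWr : (fun r => W (r, s)) = indicator (Ioi s) fun r => omega μ (r - s) * φ s := by
      funext r; by_cases h : s < r <;> simp [hW, indicator, h, mem_Ioi]
    rw [hWr, integral_indicator measurableSet_Ioi, hν,
      Measure.restrict_restrict measurableSet_Ioi]
    have hIoc : Ioi s ∩ Ioc 0 t = Ioc s t := by
      ext x
      simp only [mem_inter_iff, mem_Ioi, mem_Ioc]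
      constructor
      · rintro ⟨h1, _, h3⟩; exact ⟨h1, h3⟩
      · rintro ⟨h1, h2⟩; exact ⟨h1, lt_trans hs.1 h1, h2⟩
    rw [hIoc, ← intervalIntegral.integral_of_le hs.2, intervalIntegral.integral_mul_const,
      integral_omega_right hμ]
  have hL : ∫ r in (0:ℝ)..t, RL μ φ r = ∫ r, (∫ s, W (r, s) ∂ν) ∂ν := by
    rw [intervalIntegral.integral_of_le ht.le]
    exact setIntegral_congr_fun measurableSet_Ioc fun r hr => (hVal r hr).symm
  have hR : ∫ s, (∫ r, W (r, s) ∂ν) ∂ν = RL (μ + 1) φ t := by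
    calc ∫ s, (∫ r, W (r, s) ∂ν) ∂ν = ∫ s in Ioc (0:ℝ) t, omega (μ + 1) (t - s) * φ s :=
          setIntegral_congr_fun measurableSet_Ioc fun s hs => hVal2 s hs
      _ = RL (μ + 1) φ t := by rw [RL, intervalIntegral.integral_of_le ht.le]
  rw [hL, hswap, hR]

lemma hasDerivAt_RL_succ {μ : ℝ} (hμ : 0 < μ) {φ : ℝ → ℝ} (hφ : Continuous φ) {t : ℝ}
    (ht : 0 < t) : HasDerivAt (RL (μ + 1) φ) (RL μ φ t) t := by
  have hmeas : StronglyMeasurableAtFilter (RL μ φ) (𝓝 t) volume :=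
    ContinuousAt.stronglyMeasurableAtFilter isOpen_Ioi
      (fun x hx => continuousAt_RL hμ hφ hx) t ht
  have h := intervalIntegral.integral_hasDerivAt_right
    (intervalIntegrable_RL hμ hφ ht) hmeas (continuousAt_RL hμ hφ ht)
  apply h.congr_of_eventuallyEq
  filter_upwards [eventually_gt_nhds ht] with r hr
  exact (RL_semigroup hμ hφ hr).symm

end Aux

/-- `t ∂_t^{1-α} u(t) = I^α (M u' + α u)(t)`. -/
theorem stmt_15 (α T : ℝ) (hα0 : 0 < α) (hα1 : α < 1) (hT : 0 < T)
    (u : ℝ → ℝ) (hu : ContDiff ℝ 1 u) :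
    ∀ t ∈ Set.Ioc (0:ℝ) T,
      t * deriv (RL α u) t = RL α (fun s => s * deriv u s + α * u s) t := by
  intro t htT
  obtain ⟨ht, _⟩ := htT
  have hv : Continuous (deriv u) := hu.continuous_deriv le_rfl
  have hω : HasDerivAt (omega (α + 1)) (omega α t) t := by
    have hr : HasDerivAt (fun x : ℝ => x ^ α) (α * t ^ (α - 1)) t :=
      Real.hasDerivAt_rpow_const (Or.inl ht.ne')
    have h := hr.div_const (Real.Gamma (α + 1))
    have e1 : omega (α + 1) = fun x : ℝ => x ^ α / Real.Gamma (α + 1) := by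
      funext x; simp [omega, add_sub_cancel_right]
    have e2 : omega α t = α * t ^ (α - 1) / Real.Gamma (α + 1) := by
      rw [Real.Gamma_add_one hα0.ne', omega, mul_div_mul_left _ _ hα0.ne']
    rw [e1, e2]
    exact h
  have hG : HasDerivAt (RL (α + 1) (deriv u)) (RL α (deriv u) t) t :=
    hasDerivAt_RL_succ hα0 hv ht
  have hEv : RL α u =ᶠ[nhds t] fun r => u 0 * omega (α + 1) r + RL (α + 1) (deriv u) r := by
    filter_upwards [eventually_gt_nhds ht] with r hr
    exact RL_parts hα0 hu hr
  have hD : HasDerivAt (RL α u) (u 0 * omega α t + RL α (deriv u) t) t :=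
    ((hω.const_mul (u 0)).add hG).congr_of_eventuallyEq hEv
  rw [hD.deriv]
  have hsv : Continuous fun s : ℝ => s * deriv u s := continuous_id.mul hv
  have hA : IntervalIntegrable (fun s => omega α (t - s) * (s * deriv u s)) volume 0 t :=
    intervalIntegrable_omega_mul hα0 hsv 0 t
  have hB : IntervalIntegrable (fun s => omega α (t - s) * u s) volume 0 t :=
    intervalIntegrable_omega_mul hα0 hu.continuous 0 t
  have hB' : IntervalIntegrable (fun s => omega (α + 1) (t - s) * deriv u s) volume 0 t :=
    intervalIntegrable_omega_mul (by linarith) hv 0 t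
  have hsplit : RL α (fun s => s * deriv u s + α * u s) t
      = (∫ s in (0:ℝ)..t, omega α (t - s) * (s * deriv u s))
        + α * ∫ s in (0:ℝ)..t, omega α (t - s) * u s := by
    rw [RL]
    rw [show (fun s => omega α (t - s) * (s * deriv u s + α * u s))
        = fun s => omega α (t - s) * (s * deriv u s) + α * (omega α (t - s) * u s) from
      funext fun s => by ring]
    rw [intervalIntegral.integral_add hA (hB.const_mul α), intervalIntegral.integral_const_mul]
  have hT2 : t * RL α (deriv u) t
      = α * RL (α + 1) (deriv u) t + ∫ s in (0:ℝ)..t, omega α (t - s) * (s * deriv u s) := by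
    have hc : ∀ s ∈ Set.uIcc (0:ℝ) t, t * (omega α (t - s) * deriv u s)
        = α * (omega (α + 1) (t - s) * deriv u s) + omega α (t - s) * (s * deriv u s) := by
      intro s hs
      rw [Set.uIcc_of_le ht.le] at hs
      have h1 : (t - s) * omega α (t - s) = α * omega (α + 1) (t - s) :=
        mul_omega_self hα0 (by linarith [hs.2])
      calc t * (omega α (t - s) * deriv u s)
          = ((t - s) * omega α (t - s)) * deriv u s
            + omega α (t - s) * (s * deriv u s) := by ring
        _ = (α * omega (α + 1) (t - s)) * deriv u s
            + omega α (t - s) * (s * deriv u s) := by rw [h1]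
        _ = _ := by ring
    calc t * RL α (deriv u) t
        = ∫ s in (0:ℝ)..t, t * (omega α (t - s) * deriv u s) := by
          rw [RL, ← intervalIntegral.integral_const_mul]
      _ = ∫ s in (0:ℝ)..t, (α * (omega (α + 1) (t - s) * deriv u s)
            + omega α (t - s) * (s * deriv u s)) := intervalIntegral.integral_congr hc
      _ = α * RL (α + 1) (deriv u) t
            + ∫ s in (0:ℝ)..t, omega α (t - s) * (s * deriv u s) := by
          rw [intervalIntegral.integral_add (hB'.const_mul α) hA,
            intervalIntegral.integral_const_mul, RL]
  have e2 : RL α u t = u 0 * omega (α + 1) t + RL (α + 1) (deriv u) t := RL_parts hα0 hu ht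
  have e3 : t * omega α t = α * omega (α + 1) t := mul_omega_self hα0 ht.le
  have hI2 : (∫ s in (0:ℝ)..t, omega α (t - s) * u s) = RL α u t := rfl
  rw [hsplit, hI2]
  linear_combination hT2 - α * e2 + u 0 * e3
end
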